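/- arXiv:0901.4036 — 4 statements merged into one kernel-verified Lean document; each statement's English description precedes it below -/
import Mathlib

section
/- For all indices 1 ≤ j ≤ i ≤ m, the Abaffian matrix H_{i+1} annihilates the earlier rows of A: H_{i+1} a_j = 0. -/
open Matrix



lemma vecMulVec_mulVec' (u v x : Fin n → ℝ) :
    (Matrix.vecMulVec u v).mulVec x = (v ⬝ᵥ x) • u := by
  ext i
  simp [Matrix.mulVec, Matrix.vecMulVec_apply, dotProduct, Finset.sum_mul, Finset.mul_sum,
    mul_comm, mul_assoc, mul_left_comm]

/-- **ABS algorithm, annihilation property.**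
For all indices `1 ≤ j ≤ i ≤ m`, the Abaffian matrix `H (i+1)` annihilates
the earlier rows of `A`: `H (i+1) *ᵥ a j = 0`. -/
theorem abs_abaffian_annihilates
    (m n : ℕ) (hm : 0 < m) (hmn : m ≤ n)
    (a z w p : ℕ → (Fin n → ℝ))
    (H : ℕ → Matrix (Fin n) (Fin n) ℝ)
    (hH1 : IsUnit (H 1))
    (hz : ∀ i, 1 ≤ i → i ≤ m → z i ⬝ᵥ (H i).mulVec (a i) ≠ 0)
    (hw : ∀ i, 1 ≤ i → i ≤ m → w i ⬝ᵥ (H i).mulVec (a i) ≠ 0)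
    (hrec : ∀ i, 1 ≤ i → i ≤ m →
      H (i + 1) = H i - (w i ⬝ᵥ (H i).mulVec (a i))⁻¹ •
        Matrix.vecMulVec ((H i).mulVec (a i)) (Matrix.vecMul (w i) (H i)))
    (hp : ∀ i, 1 ≤ i → i ≤ m → p i = Matrix.mulVec (H i)ᵀ (z i)) :
    ∀ i j, 1 ≤ j → j ≤ i → i ≤ m → (H (i + 1)).mulVec (a j) = 0 := by
  intro i
  induction i with
  | zero => intro j h1 h2 _; omega
  | succ k ih =>
    intro j hj hji him
    have hk1 : 1 ≤ k + 1 := Nat.le_add_left 1 k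
    have key : ∀ l, 1 ≤ l → l ≤ k + 1 →
        (H (k + 2)).mulVec (a l) = (H (k+1)).mulVec (a l) -
          ((w (k+1) ⬝ᵥ (H (k+1)).mulVec (a (k+1)))⁻¹ *
            (w (k+1) ⬝ᵥ (H (k+1)).mulVec (a l))) • (H (k+1)).mulVec (a (k+1)) := by
      intro l _ _
      rw [hrec (k+1) hk1 him]
      rw [sub_mulVec, smul_mulVec, vecMulVec_mulVec', smul_smul]
      simp only [dotProduct_mulVec]
    rcases Nat.lt_or_ge j (k+1) with hlt | hge
    · -- j ≤ k, use ih
      have hjk : j ≤ k := Nat.lt_succ_iff.mp hlt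
      have hk : k ≤ m := Nat.le_of_succ_le him
      have hprev : (H (k+1)).mulVec (a j) = 0 := ih j hj hjk hk
      rw [key j hj (Nat.le_succ_of_le hjk), hprev, dotProduct_zero, mul_zero,
        zero_smul, sub_zero]
    · have hje : j = k + 1 := le_antisymm hji hge
      subst hje
      rw [key (k+1) hk1 le_rfl]
      rw [inv_mul_cancel₀ (hw (k+1) hk1 him), one_smul, sub_self]
end

section
/- Implicit factorization property: for each 1 ≤ i ≤ m, the i × i matrix L_i whose (k, j) entry is a_kᵀ p_j is lower triangular (its entries vanish for k < j) and all its diagonal entries a_jᵀ p_j = z_jᵀ H_j a_j are nonzero; consequently L_i is nonsingular. Equivalently, writing A_i = (a₁, …, a_i)ᵀ and P_i = (p₁, …, p_i), one has A_i P_i = L_i with L_i nonsingular lower triangular. -/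
open Matrix

theorem abs_implicit_factorization
    (m n : ℕ) (hm : 0 < m) (hmn : m ≤ n)
    (a z w p : ℕ → (Fin n → ℝ))
    (H : ℕ → Matrix (Fin n) (Fin n) ℝ)
    (hH1 : IsUnit (H 1))
    (hz : ∀ i, 1 ≤ i → i ≤ m → z i ⬝ᵥ (H i).mulVec (a i) ≠ 0)
    (hw : ∀ i, 1 ≤ i → i ≤ m → w i ⬝ᵥ (H i).mulVec (a i) ≠ 0)
    (hrec : ∀ i, 1 ≤ i → i ≤ m →
      H (i + 1) = H i - (w i ⬝ᵥ (H i).mulVec (a i))⁻¹ •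
        Matrix.vecMulVec ((H i).mulVec (a i)) (Matrix.vecMul (w i) (H i)))
    (hp : ∀ i, 1 ≤ i → i ≤ m → p i = Matrix.mulVec (H i)ᵀ (z i)) :
    ∀ i, 1 ≤ i → i ≤ m →
      ∀ L : Matrix (Fin i) (Fin i) ℝ,
        L = Matrix.of (fun k j : Fin i => a (k.1 + 1) ⬝ᵥ p (j.1 + 1)) →
        (∀ k j : Fin i, (k : ℕ) < (j : ℕ) → L k j = 0) ∧
        (∀ j : Fin i,
          L j j = z (j.1 + 1) ⬝ᵥ (H (j.1 + 1)).mulVec (a (j.1 + 1)) ∧ L j j ≠ 0) ∧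
        IsUnit L := by
  -- Key lemma: H j annihilates a k for 1 ≤ k < j ≤ m.
  have key : ∀ j, ∀ k, 1 ≤ k → k < j → j ≤ m → (H j).mulVec (a k) = 0 := by
    intro j
    induction j with
    | zero => intro k hk hkj hjm; omega
    | succ j ih =>
      intro k hk hkj hjm
      have hj1 : 1 ≤ j := by omega
      have hjm' : j ≤ m := by omega
      have hrj := hrec j hj1 hjm'
      have haux : (Matrix.vecMulVec ((H j).mulVec (a j)) (Matrix.vecMul (w j) (H j))).mulVec (a k)
          = (w j ⬝ᵥ (H j).mulVec (a k)) • ((H j).mulVec (a j)) := by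
        rw [Matrix.dotProduct_mulVec]
        funext x
        simp only [Matrix.mulVec, Matrix.vecMulVec_apply, dotProduct, Pi.smul_apply,
          smul_eq_mul, Finset.sum_mul, Finset.mul_sum]
        rw [Finset.sum_comm]
        exact Finset.sum_congr rfl fun y _ => Finset.sum_congr rfl fun x' _ => by ring
      have expand : (H (j+1)).mulVec (a k) =
          (H j).mulVec (a k) -
            ((w j ⬝ᵥ (H j).mulVec (a j))⁻¹ * (w j ⬝ᵥ (H j).mulVec (a k))) •
              (H j).mulVec (a j) := by
        rw [hrj, Matrix.sub_mulVec, Matrix.smul_mulVec, haux, smul_smul]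
      rcases Nat.lt_or_ge k j with hlt | hge
      · have h0 := ih k hk hlt hjm'
        rw [expand, h0]
        simp [h0]
      · have hkj' : k = j := by omega
        subst hkj'
        rw [expand]
        rw [inv_mul_cancel₀ (hw k hj1 hjm')]
        simp
  -- a_k ⬝ p_j = z_j ⬝ H_j a_k
  have dotp : ∀ k j, 1 ≤ j → j ≤ m → a k ⬝ᵥ p j = z j ⬝ᵥ (H j).mulVec (a k) := by
    intro k j hj1 hjm
    rw [hp j hj1 hjm]
    rw [Matrix.mulVec_transpose, dotProduct_comm, ← Matrix.dotProduct_mulVec]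
  intro i hi1 him L hL
  have hzero : ∀ k j : Fin i, (k : ℕ) < (j : ℕ) → L k j = 0 := by
    intro k j hkj
    rw [hL]
    have hj1 : 1 ≤ j.1 + 1 := by omega
    have hjm : j.1 + 1 ≤ m := by omega
    simp only [Matrix.of_apply]
    rw [dotp _ _ hj1 hjm, key (j.1+1) (k.1+1) (by omega) (by omega) hjm]
    simp
  have hdiag : ∀ j : Fin i,
      L j j = z (j.1 + 1) ⬝ᵥ (H (j.1 + 1)).mulVec (a (j.1 + 1)) ∧ L j j ≠ 0 := by
    intro j
    have hj1 : 1 ≤ j.1 + 1 := by omega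
    have hjm : j.1 + 1 ≤ m := by omega
    constructor
    · rw [hL]; exact dotp _ _ hj1 hjm
    · rw [hL]
      simp only [Matrix.of_apply]
      rw [dotp _ _ hj1 hjm]
      exact hz _ hj1 hjm
  refine ⟨hzero, hdiag, ?_⟩
  rw [Matrix.isUnit_iff_isUnit_det]
  have hbt : L.BlockTriangular OrderDual.toDual := by
    intro k j hkj
    exact hzero k j (by exact_mod_cast hkj)
  rw [Matrix.det_of_lowerTriangular L hbt]
  exact isUnit_iff_ne_zero.mpr (Finset.prod_ne_zero_iff.mpr fun j _ => (hdiag j).2)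
end

section
/- Solution variety: let b ∈ ℝ^m, assume a₁, …, a_i are linearly independent, and suppose x_{i+1} ∈ ℝⁿ satisfies a_jᵀ x_{i+1} = b_j for j = 1, …, i. Then the set of all solutions of the first i equations, {x ∈ ℝⁿ : a_jᵀ x = b_j for j = 1, …, i}, equals the affine variety {x_{i+1} + H_{i+1}ᵀ q : q ∈ ℝⁿ}. -/
open Matrix

lemma my_vecMul_vecMulVec {n : ℕ} (x u v : Fin n → ℝ) :
    Matrix.vecMul x (Matrix.vecMulVec u v) = (x ⬝ᵥ u) • v := by
  funext j
  simp [Matrix.vecMul, Matrix.vecMulVec, dotProduct, Finset.sum_mul, mul_assoc]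

lemma my_vecMulVec_mulVec {n : ℕ} (u v x : Fin n → ℝ) :
    Matrix.mulVec (Matrix.vecMulVec u v) x = (v ⬝ᵥ x) • u := by
  funext j
  simp [Matrix.mulVec, Matrix.vecMulVec, dotProduct, Finset.mul_sum, mul_comm,
    mul_left_comm]

lemma my_transpose_vecMulVec {n : ℕ} (u v : Fin n → ℝ) :
    (Matrix.vecMulVec u v)ᵀ = Matrix.vecMulVec v u := by
  funext i j
  simp [Matrix.vecMulVec, mul_comm]

lemma my_null (m n : ℕ) (a w : ℕ → (Fin n → ℝ)) (H : ℕ → Matrix (Fin n) (Fin n) ℝ)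
    (hw : ∀ i, 1 ≤ i → i ≤ m → w i ⬝ᵥ (H i).mulVec (a i) ≠ 0)
    (hrec : ∀ i, 1 ≤ i → i ≤ m →
      H (i + 1) = H i - (w i ⬝ᵥ (H i).mulVec (a i))⁻¹ •
        Matrix.vecMulVec ((H i).mulVec (a i)) (Matrix.vecMul (w i) (H i))) :
    ∀ i, 1 ≤ i → i ≤ m → ∀ j, 1 ≤ j → j ≤ i → (H (i + 1)).mulVec (a j) = 0 := by
  intro i
  induction i with
  | zero => omega
  | succ i ih =>
    intro _ hi j hj1 hji
    rw [hrec (i + 1) (by omega) hi, Matrix.sub_mulVec, Matrix.smul_mulVec,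
      my_vecMulVec_mulVec]
    rcases eq_or_lt_of_le hji with h | h
    · subst h
      rw [← Matrix.dotProduct_mulVec]
      rw [smul_smul, inv_mul_cancel₀ (hw (i + 1) (by omega) hi), one_smul, sub_self]
    · have hji' : j ≤ i := by omega
      have h0 : (H (i + 1)).mulVec (a j) = 0 := ih (by omega) (by omega) j hj1 hji'
      rw [h0, ← Matrix.dotProduct_mulVec, h0]
      simp

lemma my_surj (m n : ℕ) (a w : ℕ → (Fin n → ℝ)) (H : ℕ → Matrix (Fin n) (Fin n) ℝ)
    (hH1 : IsUnit (H 1))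
    (hrec : ∀ i, 1 ≤ i → i ≤ m →
      H (i + 1) = H i - (w i ⬝ᵥ (H i).mulVec (a i))⁻¹ •
        Matrix.vecMulVec ((H i).mulVec (a i)) (Matrix.vecMul (w i) (H i))) :
    ∀ i, i ≤ m → ∀ v : Fin n → ℝ, (∀ j, 1 ≤ j → j ≤ i → a j ⬝ᵥ v = 0) →
      ∃ q : Fin n → ℝ, Matrix.mulVec (H (i + 1))ᵀ q = v := by
  intro i
  induction i with
  | zero =>
    intro _ v _
    have hd : IsUnit (H 1).det := (Matrix.isUnit_iff_isUnit_det _).mp hH1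
    refine ⟨Matrix.mulVec ((H 1)ᵀ)⁻¹ v, ?_⟩
    rw [Matrix.mulVec_mulVec, Matrix.mul_nonsing_inv _ (by simpa using hd), Matrix.one_mulVec]
  | succ i ih =>
    intro hi v hv
    obtain ⟨u, hu⟩ := ih (by omega) v (fun j hj1 hji => hv j hj1 (by omega))
    refine ⟨u, ?_⟩
    rw [hrec (i + 1) (by omega) hi, Matrix.transpose_sub, Matrix.transpose_smul,
      Matrix.sub_mulVec, Matrix.smul_mulVec, my_transpose_vecMulVec,
      my_vecMulVec_mulVec]
    have h1 : (H (i + 1)).mulVec (a (i + 1)) ⬝ᵥ u = 0 := by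
      rw [dotProduct_comm, Matrix.dotProduct_mulVec, ← Matrix.mulVec_transpose, hu,
        dotProduct_comm]
      exact hv (i + 1) (by omega) (by omega)
    rw [h1, zero_smul, smul_zero, sub_zero, hu]

theorem abs_solution_variety
    (m n : ℕ) (hm : 0 < m) (hmn : m ≤ n)
    (a z w p : ℕ → (Fin n → ℝ))
    (H : ℕ → Matrix (Fin n) (Fin n) ℝ)
    (hH1 : IsUnit (H 1))
    (hz : ∀ i, 1 ≤ i → i ≤ m → z i ⬝ᵥ (H i).mulVec (a i) ≠ 0)
    (hw : ∀ i, 1 ≤ i → i ≤ m → w i ⬝ᵥ (H i).mulVec (a i) ≠ 0)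
    (hrec : ∀ i, 1 ≤ i → i ≤ m →
      H (i + 1) = H i - (w i ⬝ᵥ (H i).mulVec (a i))⁻¹ •
        Matrix.vecMulVec ((H i).mulVec (a i)) (Matrix.vecMul (w i) (H i)))
    (hp : ∀ i, 1 ≤ i → i ≤ m → p i = Matrix.mulVec (H i)ᵀ (z i)) :
    ∀ i, 1 ≤ i → i ≤ m →
      LinearIndependent ℝ (fun j : Fin i => a (j.1 + 1)) →
      ∀ (b : ℕ → ℝ) (x₁ : Fin n → ℝ),
        (∀ j, 1 ≤ j → j ≤ i → a j ⬝ᵥ x₁ = b j) →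
        {x : Fin n → ℝ | ∀ j, 1 ≤ j → j ≤ i → a j ⬝ᵥ x = b j} =
          {x : Fin n → ℝ | ∃ q : Fin n → ℝ, x = x₁ + Matrix.mulVec (H (i + 1))ᵀ q} := by
  intro i hi1 him _ b x₁ hx₁
  ext x
  simp only [Set.mem_setOf_eq]
  constructor
  · intro hx
    obtain ⟨q, hq⟩ := my_surj m n a w H hH1 hrec i him (x - x₁)
      (fun j hj1 hji => by
        rw [dotProduct_sub, hx j hj1 hji, hx₁ j hj1 hji, sub_self])
    exact ⟨q, by rw [hq]; abel⟩
  · rintro ⟨q, rfl⟩ j hj1 hji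
    rw [dotProduct_add, hx₁ j hj1 hji, Matrix.dotProduct_mulVec,
      Matrix.vecMul_transpose, my_null m n a w H hw hrec i hi1 him j hj1 hji]
    simp
end

section
/- Theorem 4.2: for each i with 1 ≤ i ≤ m, the iterate ξ_{i+1} solves the first i equations of the stochastic system pointwise: for every l with 1 ≤ l ≤ i and every ω ∈ Ω, a_lᵀ ξ_{i+1}(ω) = η_l(ω). -/
open Matrix MeasureTheory ProbabilityTheory

lemma vecMulVec_mulVec_aux {n : ℕ} (u r x : Fin n → ℝ) :
    (Matrix.vecMulVec u r).mulVec x = (r ⬝ᵥ x) • u := by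
  funext i
  simp [Matrix.mulVec, Matrix.vecMulVec_apply, dotProduct, Finset.mul_sum,
    Finset.sum_mul, mul_comm, mul_assoc, mul_left_comm]

theorem absS_xi_solves_first_equations
    (m n : ℕ) (hm : 0 < m) (hmn : m ≤ n)
    (a z w p : ℕ → (Fin n → ℝ))
    (H : ℕ → Matrix (Fin n) (Fin n) ℝ)
    (hH1 : IsUnit (H 1))
    (hz : ∀ i, 1 ≤ i → i ≤ m → z i ⬝ᵥ (H i).mulVec (a i) ≠ 0)
    (hw : ∀ i, 1 ≤ i → i ≤ m → w i ⬝ᵥ (H i).mulVec (a i) ≠ 0)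
    (hrec : ∀ i, 1 ≤ i → i ≤ m →
      H (i + 1) = H i - (w i ⬝ᵥ (H i).mulVec (a i))⁻¹ •
        Matrix.vecMulVec ((H i).mulVec (a i)) (Matrix.vecMul (w i) (H i)))
    (hp : ∀ i, 1 ≤ i → i ≤ m → p i = Matrix.mulVec (H i)ᵀ (z i))
    {Ω : Type*} [MeasurableSpace Ω] (P : Measure Ω) [IsProbabilityMeasure P]
    (η : ℕ → Ω → ℝ) (v : ℕ → ℝ)
    (hηmeas : ∀ i, Measurable (η i))
    (hηindep : iIndepFun η P)
    (hηlaw : ∀ i, 1 ≤ i → i ≤ m → Measure.map (η i) P = gaussianReal (v i) 1)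
    (ξ₁ : Fin n → ℝ)
    (ξ : ℕ → Ω → (Fin n → ℝ)) (τ α : ℕ → Ω → ℝ)
    (hξ1 : ξ 1 = fun _ => ξ₁)
    (hτ : ∀ i, 1 ≤ i → i ≤ m → ∀ ω, τ i ω = a i ⬝ᵥ ξ i ω - η i ω)
    (hα : ∀ i, 1 ≤ i → i ≤ m → ∀ ω, α i ω = τ i ω / (a i ⬝ᵥ p i))
    (hξ : ∀ i, 1 ≤ i → i ≤ m → ∀ ω, ξ (i + 1) ω = ξ i ω - α i ω • p i) :
    ∀ i, 1 ≤ i → i ≤ m → ∀ l, 1 ≤ l → l ≤ i → ∀ ω, a l ⬝ᵥ ξ (i + 1) ω = η l ω := by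
  -- Key property: H j annihilates a l for l < j (within range)
  have Hzero : ∀ l, 1 ≤ l → l ≤ m → ∀ j, l < j → j ≤ m + 1 → (H j).mulVec (a l) = 0 := by
    intro l hl1 hlm j
    induction j with
    | zero => omega
    | succ j ih =>
      intro hlj hjm
      rcases Nat.lt_or_ge l j with hlt | hge
      · -- j > l, so H j a l = 0 already, and H (j+1) = H j - ...
        have hj1 : 1 ≤ j := by omega
        have hjm' : j ≤ m := by omega
        have h0 : (H j).mulVec (a l) = 0 := ih hlt (by omega)
        rw [hrec j hj1 hjm', Matrix.sub_mulVec, Matrix.smul_mulVec,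
          vecMulVec_mulVec_aux]
        have : Matrix.vecMul (w j) (H j) ⬝ᵥ a l = 0 := by
          rw [← Matrix.dotProduct_mulVec, h0, dotProduct_zero]
        rw [this, zero_smul, smul_zero, h0, sub_zero]
      · -- l = j
        have hlj' : l = j := by omega
        subst hlj'
        rw [hrec l hl1 (by omega), Matrix.sub_mulVec, Matrix.smul_mulVec,
          vecMulVec_mulVec_aux]
        have hwl : Matrix.vecMul (w l) (H l) ⬝ᵥ a l = w l ⬝ᵥ (H l).mulVec (a l) := by
          rw [← Matrix.dotProduct_mulVec]
        rw [hwl, smul_smul, inv_mul_cancel₀ (hw l hl1 (by omega)), one_smul, sub_self]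
  -- a l ⬝ᵥ p i = 0 for l < i
  have hap0 : ∀ i, 1 ≤ i → i ≤ m → ∀ l, 1 ≤ l → l < i → a l ⬝ᵥ p i = 0 := by
    intro i hi1 him l hl1 hli
    rw [hp i hi1 him, Matrix.dotProduct_mulVec, Matrix.vecMul_transpose,
      Hzero l hl1 (by omega) i hli (by omega), zero_dotProduct]
  -- a i ⬝ᵥ ξ (i+1) ω = η i ω for the current step
  have hstep : ∀ i, 1 ≤ i → i ≤ m → ∀ ω, a i ⬝ᵥ ξ (i + 1) ω = η i ω := by
    intro i hi1 him ω
    have hne : a i ⬝ᵥ p i ≠ 0 := by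
      rw [hp i hi1 him, Matrix.dotProduct_mulVec, Matrix.vecMul_transpose,
        dotProduct_comm]
      exact hz i hi1 him
    rw [hξ i hi1 him ω, dotProduct_sub, dotProduct_smul, hα i hi1 him ω,
      hτ i hi1 him ω]
    rw [smul_eq_mul, div_mul_cancel₀ _ hne]; ring
  intro i
  induction i with
  | zero => intro h; omega
  | succ i ih =>
    intro _ him l hl1 hli ω
    rcases Nat.lt_or_ge l (i + 1) with hlt | hge
    · -- l ≤ i : previous step plus orthogonality
      have hi1 : 1 ≤ i := by omega
      have prev : a l ⬝ᵥ ξ (i + 1) ω = η l ω :=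
        ih hi1 (by omega) l hl1 (by omega) ω
      rw [hξ (i + 1) (by omega) him ω, dotProduct_sub, dotProduct_smul,
        hap0 (i + 1) (by omega) him l hl1 hlt, smul_eq_mul, mul_zero, sub_zero, prev]
    · have : l = i + 1 := by omega
      subst this
      exact hstep (i + 1) (by omega) him ω
end
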